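/- On ℝ², the C∞-module generated by ∂/∂x together with all vector fields φ(x)·∂/∂y, where φ ranges over smooth functions vanishing identically on the half-plane x ≤ 0, is closed under the Lie bracket of vector fields but is not locally finitely generated at the origin (hence is not a Hermann foliation). -/

import Mathlib

open Set Filter Topology

-- deriv of smooth function vanishing on Iic 0 also vanishes on Iic 0
lemma deriv_flat {φ : ℝ → ℝ} (hφ : ContDiff ℝ (⊤ : ℕ∞) φ) (h0 : ∀ x ≤ (0:ℝ), φ x = 0) :
    ∀ x ≤ (0:ℝ), deriv φ x = 0 := by
  intro x hx
  rcases lt_or_eq_of_le hx with hx | hx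
  · have : φ =ᶠ[𝓝 x] (fun _ => (0:ℝ)) := by
      filter_upwards [Iio_mem_nhds hx] with y hy
      exact h0 y (le_of_lt hy)
    rw [this.deriv_eq]
    simp
  · subst hx
    have hd : HasDerivWithinAt φ (deriv φ 0) (Iic 0) 0 :=
      ((hφ.differentiable (by simp)) 0).hasDerivAt.hasDerivWithinAt
    have hc : HasDerivWithinAt φ 0 (Iic 0) 0 := by
      have : HasDerivWithinAt (fun _ : ℝ => (0:ℝ)) 0 (Iic 0) 0 := (hasDerivAt_const _ _).hasDerivWithinAt
      exact this.congr (fun y hy => h0 y hy) (by simp [h0 0 le_rfl])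
    have hu : UniqueDiffWithinAt ℝ (Iic (0:ℝ)) 0 := uniqueDiffOn_Iic 0 0 (by simp)
    exact (hd.derivWithin hu).symm.trans (hc.derivWithin hu)

/-- The generating vector fields on `ℝ²`: `∂/∂x` together with all fields `φ(x)·∂/∂y`
where `φ` is smooth and vanishes identically on the half-line `x ≤ 0`. -/
def gens15 : Set ((ℝ × ℝ) → (ℝ × ℝ)) :=
  {fun _ => ((1 : ℝ), (0 : ℝ))} ∪
    {X | ∃ φ : ℝ → ℝ, ContDiff ℝ (⊤ : ℕ∞) φ ∧ (∀ x ≤ (0 : ℝ), φ x = 0) ∧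
      X = fun p => ((0 : ℝ), φ p.1)}

/-- The `C^∞(ℝ²)`-module generated by `gens15`. -/
def V15 : Set ((ℝ × ℝ) → (ℝ × ℝ)) :=
  {X | ∃ (k : ℕ) (a : Fin k → (ℝ × ℝ) → ℝ) (g : Fin k → (ℝ × ℝ) → (ℝ × ℝ)),
    (∀ i, ContDiff ℝ (⊤ : ℕ∞) (a i)) ∧ (∀ i, g i ∈ gens15) ∧
    X = fun p => ∑ i, a i p • g i p}

/-- The Lie bracket of vector fields on `ℝ²` (viewed as smooth maps `ℝ² → ℝ²`). -/
noncomputable def vbracket15 (X Y : (ℝ × ℝ) → (ℝ × ℝ)) : (ℝ × ℝ) → (ℝ × ℝ) :=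
  fun p => fderiv ℝ Y p (X p) - fderiv ℝ X p (Y p)

/-- On `ℝ²`, the `C^∞`-module generated by `∂/∂x` together with all vector fields
`φ(x)·∂/∂y`, `φ` smooth vanishing identically on `x ≤ 0`, is closed under the Lie bracket
of vector fields, but it is not locally finitely generated at the origin (hence it is not
a Hermann foliation). -/

lemma gens_props {g : (ℝ × ℝ) → (ℝ × ℝ)} (hg : g ∈ gens15) :
    ContDiff ℝ (⊤ : ℕ∞) g ∧ (∀ p : ℝ × ℝ, p.1 ≤ 0 → (g p).2 = 0) ∧
      ∃ h ∈ gens15, ∀ (p v : ℝ × ℝ), fderiv ℝ g p v = v.1 • h p := by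
  rcases hg with hg | ⟨φ, hφ, hφ0, rfl⟩
  · rw [Set.mem_singleton_iff] at hg
    subst hg
    refine ⟨contDiff_const, fun p _ => rfl, (fun p => ((0:ℝ), (0:ℝ))), Or.inr ⟨0, contDiff_const, fun _ _ => rfl, rfl⟩, ?_⟩
    intro p v
    rw [fderiv_fun_const]
    simp
    rfl
  · have hsm : ContDiff ℝ (⊤ : ℕ∞) (fun p : ℝ × ℝ => ((0:ℝ), φ p.1)) :=
      contDiff_const.prodMk (hφ.comp contDiff_fst)
    refine ⟨hsm, fun p hp => hφ0 p.1 hp, (fun p => ((0:ℝ), deriv φ p.1)),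
      Or.inr ⟨deriv φ, (contDiff_infty_iff_deriv.mp hφ).2, deriv_flat hφ hφ0, rfl⟩, ?_⟩
    intro p v
    have hF : HasFDerivAt (fun p : ℝ × ℝ => ((0:ℝ), φ p.1))
        ((0 : (ℝ×ℝ) →L[ℝ] ℝ).prod (deriv φ p.1 • ContinuousLinearMap.fst ℝ ℝ ℝ)) p := by
      refine (hasFDerivAt_const _ _).prodMk ?_
      exact ((hφ.differentiable (by simp)) p.1).hasDerivAt.comp_hasFDerivAt p (hasFDerivAt_fst)
    rw [hF.fderiv]
    simp [mul_comm]

lemma V15_smooth {X : (ℝ × ℝ) → (ℝ × ℝ)} (hX : X ∈ V15) : ContDiff ℝ (⊤ : ℕ∞) X := by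
  obtain ⟨k, a, g, ha, hg, rfl⟩ := hX
  exact ContDiff.sum (fun i _ => (ha i).smul (gens_props (hg i)).1)

lemma V15_snd {X : (ℝ × ℝ) → (ℝ × ℝ)} (hX : X ∈ V15) :
    ∀ p : ℝ × ℝ, p.1 ≤ 0 → (X p).2 = 0 := by
  obtain ⟨k, a, g, ha, hg, rfl⟩ := hX
  intro p hp
  simp only [Prod.snd_sum, Prod.smul_snd]
  refine Finset.sum_eq_zero (fun i _ => ?_)
  rw [(gens_props (hg i)).2.1 p hp, smul_zero]

lemma V15_add {X Y : (ℝ × ℝ) → (ℝ × ℝ)} (hX : X ∈ V15) (hY : Y ∈ V15) :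
    (fun p => X p + Y p) ∈ V15 := by
  obtain ⟨k, a, g, ha, hg, rfl⟩ := hX
  obtain ⟨m, b, h, hb, hh, rfl⟩ := hY
  refine ⟨k + m, Fin.append a b, Fin.append g h, ?_, ?_, ?_⟩
  · intro i
    refine Fin.addCases (fun i => ?_) (fun i => ?_) i
    · rw [Fin.append_left]; exact ha i
    · rw [Fin.append_right]; exact hb i
  · intro i
    refine Fin.addCases (fun i => ?_) (fun i => ?_) i
    · rw [Fin.append_left]; exact hg i
    · rw [Fin.append_right]; exact hh i
  · funext p
    rw [Fin.sum_univ_add]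
    simp only [Fin.append_left, Fin.append_right]

lemma V15_neg {X : (ℝ × ℝ) → (ℝ × ℝ)} (hX : X ∈ V15) : (fun p => -X p) ∈ V15 := by
  obtain ⟨k, a, g, ha, hg, rfl⟩ := hX
  refine ⟨k, fun i => -(a i), g, fun i => (ha i).neg, hg, ?_⟩
  funext p
  simp [Finset.sum_neg_distrib, neg_smul]

lemma rep_fderiv {k : ℕ} (a : Fin k → (ℝ×ℝ) → ℝ) (g d : Fin k → (ℝ×ℝ) → (ℝ×ℝ))
    (ha : ∀ i, ContDiff ℝ (⊤:ℕ∞) (a i)) (hg : ∀ i, ContDiff ℝ (⊤:ℕ∞) (g i))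
    (hd : ∀ i (p v : ℝ×ℝ), fderiv ℝ (g i) p v = v.1 • d i p) :
    ∀ p v : ℝ × ℝ, fderiv ℝ (fun q => ∑ i, a i q • g i q) p v
      = ∑ i, ((fderiv ℝ (a i) p v) • g i p + (a i p * v.1) • d i p) := by
  intro p v
  have hterm : ∀ i : Fin k, HasFDerivAt (fun q => a i q • g i q)
      ((a i p) • (fderiv ℝ (g i) p) + (fderiv ℝ (a i) p).smulRight (g i p)) p := by
    intro i
    exact (((ha i).differentiable (by simp)) p).hasFDerivAt.smul
      (((hg i).differentiable (by simp)) p).hasFDerivAt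
  have hsum : HasFDerivAt (fun q => ∑ i, a i q • g i q)
      (∑ i, ((a i p) • (fderiv ℝ (g i) p) + (fderiv ℝ (a i) p).smulRight (g i p))) p :=
    HasFDerivAt.fun_sum (fun i _ => hterm i)
  rw [hsum.fderiv]
  rw [ContinuousLinearMap.sum_apply]
  refine Finset.sum_congr rfl (fun i _ => ?_)
  simp only [ContinuousLinearMap.add_apply, ContinuousLinearMap.smul_apply,
    ContinuousLinearMap.smulRight_apply, hd i p v, smul_smul]
  rw [add_comm]

theorem bracket_closed : ∀ X ∈ V15, ∀ Y ∈ V15, vbracket15 X Y ∈ V15 := by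
  intro X hX Y hY
  have hXs := V15_smooth hX
  have hYs := V15_smooth hY
  obtain ⟨k, a, g, ha, hg, hXe⟩ := hX
  obtain ⟨m, b, h, hb, hh, hYe⟩ := hY
  -- derived generators
  choose dg hdg1 hdg2 using fun i => (gens_props (hg i)).2.2
  choose dh hdh1 hdh2 using fun j => (gens_props (hh j)).2.2
  have hgs : ∀ i, ContDiff ℝ (⊤:ℕ∞) (g i) := fun i => (gens_props (hg i)).1
  have hhs : ∀ j, ContDiff ℝ (⊤:ℕ∞) (h j) := fun j => (gens_props (hh j)).1
  -- coefficient smoothness helpers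
  have hXc : ContDiff ℝ (⊤:ℕ∞) X := hXs
  have hYc : ContDiff ℝ (⊤:ℕ∞) Y := hYs
  have cP1 : ∀ j, ContDiff ℝ (⊤:ℕ∞) (fun p => fderiv ℝ (b j) p (X p)) := by
    intro j
    exact ((hb j).fderiv_right (by exact_mod_cast le_top)).clm_apply hXc
  have cP2 : ∀ j, ContDiff ℝ (⊤:ℕ∞) (fun p => b j p * (X p).1) := by
    intro j
    exact (hb j).mul (contDiff_fst.comp hXc)
  have cQ1 : ∀ i, ContDiff ℝ (⊤:ℕ∞) (fun p => fderiv ℝ (a i) p (Y p)) := by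
    intro i
    exact ((ha i).fderiv_right (by exact_mod_cast le_top)).clm_apply hYc
  have cQ2 : ∀ i, ContDiff ℝ (⊤:ℕ∞) (fun p => a i p * (Y p).1) := by
    intro i
    exact (ha i).mul (contDiff_fst.comp hYc)
  have memP1 : (fun p : ℝ×ℝ => ∑ j, (fderiv ℝ (b j) p (X p)) • h j p) ∈ V15 :=
    ⟨m, _, h, cP1, hh, rfl⟩
  have memP2 : (fun p : ℝ×ℝ => ∑ j, (b j p * (X p).1) • dh j p) ∈ V15 :=
    ⟨m, _, dh, cP2, hdh1, rfl⟩
  have memQ1 : (fun p : ℝ×ℝ => ∑ i, (fderiv ℝ (a i) p (Y p)) • g i p) ∈ V15 :=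
    ⟨k, _, g, cQ1, hg, rfl⟩
  have memQ2 : (fun p : ℝ×ℝ => ∑ i, (a i p * (Y p).1) • dg i p) ∈ V15 :=
    ⟨k, _, dg, cQ2, hdg1, rfl⟩
  have key : vbracket15 X Y = fun p =>
      ((∑ j, (fderiv ℝ (b j) p (X p)) • h j p) + (∑ j, (b j p * (X p).1) • dh j p)) +
      -(((∑ i, (fderiv ℝ (a i) p (Y p)) • g i p) + (∑ i, (a i p * (Y p).1) • dg i p))) := by
    funext p
    have eY : fderiv ℝ Y p (X p) = ∑ j, ((fderiv ℝ (b j) p (X p)) • h j p + (b j p * (X p).1) • dh j p) := by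
      rw [hYe]; exact rep_fderiv b h dh hb hhs hdh2 p (X p)
    have eX : fderiv ℝ X p (Y p) = ∑ i, ((fderiv ℝ (a i) p (Y p)) • g i p + (a i p * (Y p).1) • dg i p) := by
      rw [hXe]; exact rep_fderiv a g dg ha hgs hdg2 p (Y p)
    simp only [vbracket15, eY, eX, Finset.sum_add_distrib]
    abel
  rw [key]
  exact V15_add (V15_add memP1 memP2) (V15_neg (V15_add memQ1 memQ2))

lemma flat_bound : ∀ (m : ℕ) (h : ℝ → ℝ), ContDiff ℝ (⊤:ℕ∞) h → (∀ x ≤ (0:ℝ), h x = 0) →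
    ∀ ε > (0:ℝ), ∃ δ > (0:ℝ), ∀ x : ℝ, 0 < x → x < δ → |h x| ≤ ε * x ^ m := by
  intro m
  induction m with
  | zero =>
    intro h hsm h0 ε hε
    have hc : ContinuousAt h 0 := (hsm.continuous).continuousAt
    rw [Metric.continuousAt_iff] at hc
    obtain ⟨δ, hδ, hb⟩ := hc ε hε
    refine ⟨δ, hδ, fun x hx hxδ => ?_⟩
    have := hb (x := x) (by rw [Real.dist_eq, sub_zero, abs_of_pos hx]; exact hxδ)
    rw [Real.dist_eq, h0 0 le_rfl, sub_zero] at this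
    simpa using this.le
  | succ m ih =>
    intro h hsm h0 ε hε
    have hd : ContDiff ℝ (⊤:ℕ∞) (deriv h) := (contDiff_infty_iff_deriv.mp hsm).2
    have hd0 : ∀ x ≤ (0:ℝ), deriv h x = 0 := deriv_flat hsm h0
    obtain ⟨δ, hδ, hb⟩ := ih (deriv h) hd hd0 ε hε
    refine ⟨δ, hδ, fun x hx hxδ => ?_⟩
    have key : ∀ y ∈ Set.Icc (0:ℝ) x, HasDerivWithinAt h (deriv h y) (Set.Icc 0 x) y :=
      fun y _ => ((hsm.differentiable (by simp)) y).hasDerivAt.hasDerivWithinAt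
    have bound : ∀ y ∈ Set.Ico (0:ℝ) x, ‖deriv h y‖ ≤ ε * x ^ m := by
      intro y hy
      rcases eq_or_lt_of_le hy.1 with rfl | hy0
      · rw [hd0 0 le_rfl]
        simp
        positivity
      · rw [Real.norm_eq_abs]
        calc |deriv h y| ≤ ε * y ^ m := hb y hy0 (lt_trans hy.2 hxδ)
          _ ≤ ε * x ^ m := by
              gcongr
              exact hy.2.le
    have := norm_image_sub_le_of_norm_deriv_le_segment' key bound x
      (Set.right_mem_Icc.mpr hx.le)
    rw [h0 0 le_rfl, sub_zero, Real.norm_eq_abs, sub_zero] at this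
    calc |h x| ≤ ε * x ^ m * x := this
      _ = ε * x ^ (m + 1) := by ring

lemma psi_exists (x : ℕ → ℝ) (hx0 : ∀ n, 0 < x n) (hx1 : ∀ n, x n ≤ 1) :
    ∃ ψ : ℝ → ℝ, ContDiff ℝ (⊤:ℕ∞) ψ ∧ (∀ t ≤ (0:ℝ), ψ t = 0) ∧
      ∀ n, (2:ℝ)⁻¹^n * (x n / 2)^n ≤ ψ (x n) := by
  -- the bump function
  set Bb : ContDiffBump (0:ℝ) := ⟨1/2, 1, by norm_num, by norm_num⟩ with hBb
  set B : ℝ → ℝ := ⇑Bb with hBdef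
  have hBsm : ContDiff ℝ (⊤:ℕ∞) B := Bb.contDiff
  have hB0 : ∀ t, 0 ≤ B t := fun t => Bb.nonneg
  have hB1 : ∀ t, B t ≤ 1 := fun t => Bb.le_one
  have hBone : B 0 = 1 := Bb.one_of_mem_closedBall (by simpa [Metric.mem_closedBall] using Bb.rIn_pos.le)
  have hBzero : ∀ t : ℝ, 1 ≤ |t| → B t = 0 := by
    intro t ht
    exact Bb.zero_of_le_dist (by simpa [Real.dist_eq] using ht)
  -- bounds on iterated derivatives of B
  have hM : ∀ m : ℕ, ∃ M : ℝ, ∀ t, ‖iteratedDeriv m B t‖ ≤ M := by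
    intro m
    obtain ⟨M, hMle⟩ := (ContDiff.continuous_iteratedFDeriv (m := m) (by exact_mod_cast le_top)
      hBsm).bounded_above_of_compact_support (Bb.hasCompactSupport.iteratedFDeriv m)
    exact ⟨M, fun t => by rw [← norm_iteratedFDeriv_eq_norm_iteratedDeriv]; exact hMle t⟩
  choose M hMle using hM
  have hM0 : 1 ≤ M 0 := le_trans (by simp [hBone]) (hMle 0 0)
  -- data
  set r : ℕ → ℝ := fun n => x n / 2 with hr
  have hr0 : ∀ n, 0 < r n := fun n => by simp [hr]; exact hx0 n
  have hr1 : ∀ n, r n ≤ 1 := fun n => by simp [hr]; nlinarith [hx1 n, hx0 n]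
  set c : ℕ → ℝ := fun n => (2:ℝ)⁻¹^n * (r n)^n with hc
  have hc0 : ∀ n, 0 < c n := fun n =>
    mul_pos (pow_pos (by norm_num) n) (pow_pos (hr0 n) n)
  set f : ℕ → ℝ → ℝ := fun n t => c n • B ((r n)⁻¹ * (t + -(x n))) with hf
  have hfsm : ∀ n, ContDiff ℝ (⊤:ℕ∞) (f n) := by
    intro n
    exact (hBsm.comp ((contDiff_const.mul (contDiff_id.add contDiff_const)))).const_smul _
  -- derivative bound
  set v : ℕ → ℕ → ℝ := fun m n => c n * ((r n)⁻¹^m * M m) with hv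
  have hbound : ∀ (m : ℕ) (n : ℕ) (t : ℝ), ‖iteratedFDeriv ℝ m (f n) t‖ ≤ v m n := by
    intro m n t
    have e0 : f n = c n • (fun t => B ((r n)⁻¹ * (t + -(x n)))) := rfl
    have e1 : iteratedFDeriv ℝ m (c n • (fun t => B ((r n)⁻¹ * (t + -(x n))))) t
        = c n • iteratedFDeriv ℝ m (fun t => B ((r n)⁻¹ * (t + -(x n)))) t :=
      iteratedFDeriv_const_smul_apply ((hBsm.comp ((contDiff_const.mul
        (contDiff_id.add contDiff_const)))).contDiffAt.of_le (by exact_mod_cast le_top))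
    rw [e0, e1]
    rw [norm_smul (c n) (iteratedFDeriv ℝ m (fun t => B ((r n)⁻¹ * (t + -(x n)))) t),
      Real.norm_eq_abs, abs_of_pos (hc0 n)]
    rw [norm_iteratedFDeriv_eq_norm_iteratedDeriv]
    have e2 : iteratedDeriv m (fun t => B ((r n)⁻¹ * (t + -(x n)))) t
        = iteratedDeriv m (fun z => B ((r n)⁻¹ * z)) (t + -(x n)) := by
      rw [iteratedDeriv_comp_add_const m (fun z => B ((r n)⁻¹ * z)) (-(x n))]
    have e3 : iteratedDeriv m (fun z => B ((r n)⁻¹ * z)) =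
        fun z => ((r n)⁻¹)^m • iteratedDeriv m B ((r n)⁻¹ * z) :=
      iteratedDeriv_comp_const_smul (n := m) (hBsm.of_le (by exact_mod_cast le_top)) _
    rw [e2, e3]
    simp only [norm_smul, Real.norm_eq_abs]
    rw [abs_of_pos (pow_pos (inv_pos.mpr (hr0 n)) m)]
    have hfin : |iteratedDeriv m B ((r n)⁻¹ * (t + -(x n)))| ≤ M m := by
      simpa using hMle m ((r n)⁻¹ * (t + -(x n)))
    exact mul_le_mul_of_nonneg_left (mul_le_mul_of_nonneg_left hfin
      (pow_nonneg (inv_nonneg.mpr (hr0 n).le) m)) (hc0 n).le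
  have hvsum : ∀ m : ℕ, Summable (v m) := by
    intro m
    rw [← summable_nat_add_iff m]
    have hMm0 : 0 ≤ M m := le_trans (norm_nonneg _) (hMle m 0)
    refine Summable.of_nonneg_of_le (fun n => mul_nonneg (hc0 _).le
      (mul_nonneg (pow_nonneg (inv_nonneg.mpr (hr0 _).le) m) hMm0)) (fun n => ?_)
      (((summable_geometric_of_lt_one (by norm_num) (by norm_num : (2:ℝ)⁻¹ < 1)).mul_right
        (M m)).comp_injective (add_left_injective m))
    show v m (n + m) ≤ (2:ℝ)⁻¹^(n + m) * M m
    have hMm : 0 ≤ M m := le_trans (norm_nonneg _) (hMle m 0)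
    have : (r (n+m))^(n+m) * ((r (n+m))⁻¹^m) = (r (n+m))^n := by
      rw [pow_add, inv_pow, mul_assoc, mul_inv_cancel₀ (pow_ne_zero _ (hr0 _).ne'), mul_one]
    calc v m (n+m) = (2:ℝ)⁻¹^(n+m) * ((r (n+m))^(n+m) * ((r (n+m))⁻¹^m)) * M m := by
          simp only [hv, hc]; ring
      _ = (2:ℝ)⁻¹^(n+m) * (r (n+m))^n * M m := by rw [this]
      _ ≤ (2:ℝ)⁻¹^(n+m) * 1 * M m := by
          gcongr
          exact pow_le_one₀ (hr0 _).le (hr1 _)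
      _ = (2:ℝ)⁻¹^(n+m) * M m := by ring
  -- the function
  refine ⟨fun t => ∑' n, f n t, ?_, ?_, ?_⟩
  · exact contDiff_tsum hfsm (fun k _ => hvsum k) (fun k n t _ => hbound k n t)
  · intro t ht
    have : ∀ n, f n t = 0 := by
      intro n
      have harg : (1:ℝ) ≤ |(r n)⁻¹ * (t + -(x n))| := by
        have h1 : (r n)⁻¹ * (t + -(x n)) ≤ -2 := by
          have : t + -(x n) ≤ -(x n) := by linarith
          calc (r n)⁻¹ * (t + -(x n)) ≤ (r n)⁻¹ * (-(x n)) := by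
                apply mul_le_mul_of_nonneg_left this (inv_nonneg.mpr (hr0 n).le)
            _ = -2 := by
                rw [hr]
                rw [mul_neg, neg_eq_iff_eq_neg, inv_div, div_mul_eq_mul_div,
                  div_eq_iff (hx0 n).ne']
                ring

        rw [abs_of_nonpos (by linarith)]
        linarith
      simp [hf, hBzero _ harg]
    simp [this]
  · intro n
    have hsumm : Summable (fun l => f l (x n)) :=
      Summable.of_nonneg_of_le (fun l => smul_nonneg (hc0 l).le (hB0 ((r l)⁻¹ * (x n + -(x l)))))
        (fun l => by
          have h1 : f l (x n) ≤ c l * 1 := by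
            simpa [hf] using mul_le_mul_of_nonneg_left (hB1 _) (hc0 l).le
          have h2 : c l * 1 ≤ v 0 l := by
            simp only [hv, pow_zero, one_mul, mul_one]
            nlinarith [hc0 l, hM0]
          linarith) (hvsum 0)
    have : f n (x n) = c n := by simp [hf, hBone]
    calc (2:ℝ)⁻¹^n * (x n / 2)^n = f n (x n) := by rw [this]
      _ ≤ ∑' l, f l (x n) := Summable.le_tsum hsumm n
          (fun l _ => smul_nonneg (hc0 l).le (hB0 ((r l)⁻¹ * (x n + -(x l)))))

lemma not_fg : ¬ ∃ U ∈ nhds ((0, 0) : ℝ × ℝ), ∃ (k : ℕ) (g : Fin k → (ℝ × ℝ) → (ℝ × ℝ)),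
    (∀ i, g i ∈ V15) ∧
    ∀ X ∈ V15, ∃ a : Fin k → (ℝ × ℝ) → ℝ,
      (∀ i, ContDiffOn ℝ (⊤ : ℕ∞) (a i) U) ∧
      ∀ p ∈ U, X p = ∑ i, a i p • g i p := by
  rintro ⟨U, hU, k, g, hgV, hgen⟩
  set h : Fin k → ℝ → ℝ := fun i x => (g i (x, 0)).2 with hh
  have hhsm : ∀ i, ContDiff ℝ (⊤:ℕ∞) (h i) := fun i =>
    contDiff_snd.comp ((V15_smooth (hgV i)).comp (contDiff_id.prodMk contDiff_const))
  have hh0 : ∀ i, ∀ x ≤ (0:ℝ), h i x = 0 := fun i x hx => V15_snd (hgV i) (x, 0) hx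
  set eps : ℕ → ℝ := fun n => (2:ℝ)⁻¹^n * (2:ℝ)⁻¹^n / ((k+1) * (n+1)) with heps
  have hepspos : ∀ n, 0 < eps n := fun n => by positivity
  -- choose sample points
  have hclaim : ∀ n : ℕ, ∃ xn : ℝ, (0 < xn ∧ xn ≤ (2:ℝ)⁻¹^n ∧ xn ≤ 1) ∧
      ∀ i, |h i xn| ≤ eps n * xn ^ n := by
    intro n
    have Ev1 : ∀ᶠ y in nhdsWithin (0:ℝ) (Set.Ioi 0), ∀ i, |h i y| ≤ eps n * y ^ n := by
      rw [eventually_all]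
      intro i
      obtain ⟨δ, hδ, hb⟩ := flat_bound n (h i) (hhsm i) (hh0 i) (eps n) (hepspos n)
      filter_upwards [Ioo_mem_nhdsGT_of_mem (Set.left_mem_Ico.mpr hδ)] with y hy
      exact hb y hy.1 hy.2
    have Ev2 : ∀ᶠ y in nhdsWithin (0:ℝ) (Set.Ioi 0),
        0 < y ∧ y ≤ (2:ℝ)⁻¹^n ∧ y ≤ 1 := by
      have hmem : Set.Ioo (0:ℝ) (min ((2:ℝ)⁻¹^n) 1) ∈ nhdsWithin (0:ℝ) (Set.Ioi 0) :=
        Ioo_mem_nhdsGT_of_mem (Set.left_mem_Ico.mpr (by positivity))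
      filter_upwards [hmem] with y hy
      exact ⟨hy.1, (le_min_iff.mp hy.2.le).1, (le_min_iff.mp hy.2.le).2⟩
    obtain ⟨y, hy1, hy2⟩ := (Ev2.and Ev1).exists
    exact ⟨y, hy1, hy2⟩
  choose x hx hxb using hclaim
  have hx0 : ∀ n, 0 < x n := fun n => (hx n).1
  have hx2 : ∀ n, x n ≤ (2:ℝ)⁻¹^n := fun n => (hx n).2.1
  have hx1 : ∀ n, x n ≤ 1 := fun n => (hx n).2.2
  obtain ⟨ψ, hψsm, hψ0, hψge⟩ := psi_exists x hx0 hx1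
  -- the test element of V15
  set X : (ℝ × ℝ) → (ℝ × ℝ) := fun p => ((0:ℝ), ψ p.1) with hX
  have hXmem : X ∈ V15 := by
    refine ⟨1, fun _ => fun _ => (1:ℝ), fun _ => X, fun _ => contDiff_const,
      fun _ => Or.inr ⟨ψ, hψsm, hψ0, rfl⟩, ?_⟩
    funext p
    simp
  obtain ⟨a, haC, haE⟩ := hgen X hXmem
  set Amax : ℝ := (∑ i, |a i ((0,0):ℝ×ℝ)|) + 1 with hAmax
  have hA1 : 1 ≤ Amax := by
    have : (0:ℝ) ≤ ∑ i, |a i ((0,0):ℝ×ℝ)| :=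
      Finset.sum_nonneg (fun i _ => abs_nonneg _)
    linarith
  set p : ℕ → ℝ × ℝ := fun n => (x n, 0) with hp
  have htend : Filter.Tendsto p Filter.atTop (nhds ((0,0):ℝ×ℝ)) := by
    refine Filter.Tendsto.prodMk_nhds ?_ tendsto_const_nhds
    have hgeo : Filter.Tendsto (fun n : ℕ => (2:ℝ)⁻¹^n) Filter.atTop (nhds 0) :=
      tendsto_pow_atTop_nhds_zero_of_lt_one (by norm_num) (by norm_num)
    exact tendsto_of_tendsto_of_tendsto_of_le_of_le tendsto_const_nhds hgeo
      (fun n => (hx0 n).le) hx2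
  have EvU : ∀ᶠ n in Filter.atTop, p n ∈ U := htend hU
  have EvA : ∀ᶠ n in Filter.atTop, ∀ i, |a i (p n)| ≤ Amax := by
    rw [Filter.eventually_all]
    intro i
    have hcont : ContinuousAt (a i) ((0,0):ℝ×ℝ) :=
      (haC i).continuousOn.continuousAt hU
    have : Filter.Tendsto (fun n => |a i (p n)|) Filter.atTop (nhds (|a i ((0,0):ℝ×ℝ)|)) :=
      ((hcont.tendsto.comp htend).abs)
    have hlt : |a i ((0,0):ℝ×ℝ)| < Amax := by
      have : |a i ((0,0):ℝ×ℝ)| ≤ ∑ j, |a j ((0,0):ℝ×ℝ)| :=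
        Finset.single_le_sum (f := fun j => |a j ((0,0):ℝ×ℝ)|)
          (fun j _ => abs_nonneg _) (Finset.mem_univ i)
      linarith
    filter_upwards [this.eventually_le_const hlt] with n hn using hn
  have EvN : ∀ᶠ n : ℕ in Filter.atTop, Amax < n + 1 := by
    obtain ⟨N, hN⟩ := exists_nat_gt Amax
    filter_upwards [Filter.eventually_ge_atTop N] with n hn
    have : (N:ℝ) ≤ n := by exact_mod_cast hn
    linarith
  obtain ⟨n, hnU, hnA, hnN⟩ := (EvU.and (EvA.and EvN)).exists
  -- evaluate the generation identity at p n
  have hval : ψ (x n) = ∑ i, a i (p n) * h i (x n) := by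
    have := haE (p n) hnU
    have h2 := congrArg Prod.snd this
    simpa [hX, hp, Prod.snd_sum] using h2
  -- bounds
  have hub : ψ (x n) ≤ (k * Amax) * (eps n * x n ^ n) := by
    rw [hval]
    calc ∑ i, a i (p n) * h i (x n) ≤ ∑ i : Fin k, Amax * (eps n * x n ^ n) := by
          refine Finset.sum_le_sum (fun i _ => ?_)
          calc a i (p n) * h i (x n) ≤ |a i (p n) * h i (x n)| := le_abs_self _
            _ = |a i (p n)| * |h i (x n)| := abs_mul _ _
            _ ≤ Amax * (eps n * x n ^ n) := by
                apply mul_le_mul (hnA i) (by simpa using (hxb n i)) (abs_nonneg _)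
                linarith
      _ = (k * Amax) * (eps n * x n ^ n) := by
          rw [Finset.sum_const, Finset.card_univ, Fintype.card_fin]
          simp [mul_assoc]
  have hlb : (2:ℝ)⁻¹^n * (x n / 2)^n ≤ ψ (x n) := hψge n
  -- final contradiction
  have hc : (2:ℝ)⁻¹^n * (x n / 2)^n = (2:ℝ)⁻¹^n * (2:ℝ)⁻¹^n * x n ^ n := by
    rw [div_eq_mul_inv, mul_pow]
    ring
  have hstrict : (k * Amax) * (eps n * x n ^ n) < (2:ℝ)⁻¹^n * (2:ℝ)⁻¹^n * x n ^ n := by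
    simp only [heps]
    have hxn : (0:ℝ) < x n ^ n := pow_pos (hx0 n) n
    have h2n : (0:ℝ) < (2:ℝ)⁻¹^n := by positivity
    have hkk : (k:ℝ) * Amax < (k+1) * (n+1) := by
      have h1 : (k:ℝ) * Amax ≤ k * (n+1) := by
        apply mul_le_mul_of_nonneg_left hnN.le (Nat.cast_nonneg k)
      have h2 : (k:ℝ) * (n+1) < (k+1) * (n+1) := by
        have : (0:ℝ) < n + 1 := by positivity
        nlinarith
      linarith
    rw [div_eq_mul_inv]
    have hpos : (0:ℝ) < ((k:ℝ)+1) * ((n:ℝ)+1) := by positivity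
    rw [show (k * Amax) * ((2:ℝ)⁻¹^n * (2:ℝ)⁻¹^n * (((k:ℝ)+1) * ((n:ℝ)+1))⁻¹ * x n ^ n)
        = (k * Amax) * ((((k:ℝ)+1) * ((n:ℝ)+1))⁻¹) * ((2:ℝ)⁻¹^n * (2:ℝ)⁻¹^n * x n ^ n) by ring]
    have : (k * Amax) * ((((k:ℝ)+1) * ((n:ℝ)+1))⁻¹) < 1 := by
      rw [mul_inv_lt_iff₀ hpos]
      simpa using hkk
    have hT : (0:ℝ) < 2⁻¹ ^ n * 2⁻¹ ^ n * x n ^ n := by positivity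
    exact mul_lt_of_lt_one_left hT this
  rw [hc] at hlb
  exact lt_irrefl _ ((hub.trans_lt hstrict).trans_le hlb)

theorem stmt15 :
    (∀ X ∈ V15, ∀ Y ∈ V15, vbracket15 X Y ∈ V15) ∧
    ¬ ∃ U ∈ nhds ((0, 0) : ℝ × ℝ), ∃ (k : ℕ) (g : Fin k → (ℝ × ℝ) → (ℝ × ℝ)),
      (∀ i, g i ∈ V15) ∧
      ∀ X ∈ V15, ∃ a : Fin k → (ℝ × ℝ) → ℝ,
        (∀ i, ContDiffOn ℝ (⊤ : ℕ∞) (a i) U) ∧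
        ∀ p ∈ U, X p = ∑ i, a i p • g i p := by
  exact ⟨bracket_closed, not_fg⟩
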